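/- A Rota-Baxter ideal I of Ш_k(k) is generated as a Rota-Baxter ideal by a set of homogeneous elements (elements of the form c·a_i) if and only if I is a homogeneous ideal, i.e., for every f ∈ I, each homogeneous component of f lies in I. -/

import Mathlib

open Finsupp

/-- The basis element `a_m` of the free Rota-Baxter algebra `Ш_k(k)`. -/
noncomputable def aElt {k : Type*} [CommRing k] (m : ℕ) : ℕ →₀ k := Finsupp.single m 1

/-- The product `⋄` of weight `l` on `Ш_k(k)`, defined on basis elements by
`a_m ⋄ a_n = Σ_{i=0}^{min(m,n)} C(m+n−i,m) C(m,i) l^i a_{m+n−i}` and extended bilinearly. -/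
noncomputable def diamond {k : Type*} [CommRing k] (l : k) (f g : ℕ →₀ k) : ℕ →₀ k :=
  f.sum fun m cm => g.sum fun n cn =>
    ∑ i ∈ Finset.range (min m n + 1),
      Finsupp.single (m + n - i) (cm * cn * ((m + n - i).choose m : k) * ((m.choose i : k)) * l ^ i)

/-- The Rota-Baxter operator `P (a_m) = a_{m+1}` on `Ш_k(k)`. -/
noncomputable def RBop {k : Type*} [CommRing k] (f : ℕ →₀ k) : ℕ →₀ k :=
  Finsupp.mapDomain (· + 1) f

/-- A Rota-Baxter ideal of `Ш_k(k)` of weight `l`: a `k`-submodule that is an ideal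
for `⋄` and closed under `P`. -/
def IsRBIdeal {k : Type*} [CommRing k] (l : k) (I : Submodule k (ℕ →₀ k)) : Prop :=
  (∀ f g : ℕ →₀ k, g ∈ I → diamond l f g ∈ I) ∧ (∀ f ∈ I, RBop f ∈ I)

/-- The Rota-Baxter ideal of `Ш_k(k)` generated by a set `S`. -/
noncomputable def RBspan {k : Type*} [CommRing k] (l : k) (S : Set (ℕ →₀ k)) :
    Submodule k (ℕ →₀ k) :=
  sInf {J : Submodule k (ℕ →₀ k) | IsRBIdeal l J ∧ S ⊆ J}

/-- The coefficient ideal `Ω_j(I)`: coefficients at `a_j` of elements of `I`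
supported in degrees `≤ j`. -/
def Omega {k : Type*} [CommRing k] (I : Set (ℕ →₀ k)) (j : ℕ) : Set k :=
  {b | ∃ f ∈ I, (∀ i, j < i → f i = 0) ∧ f j = b}

/-- The set of initial terms of nonzero elements of `I`. -/
def initialSet {k : Type*} [CommRing k] (I : Set (ℕ →₀ k)) : Set (ℕ →₀ k) :=
  {g | ∃ f ∈ I, ∃ n : ℕ, (∀ i, n < i → f i = 0) ∧ f n ≠ 0 ∧ g = Finsupp.single n (f n)}


lemma RBop_single' {k : Type*} [CommRing k] (n : ℕ) (c : k) :
    RBop (Finsupp.single n c) = Finsupp.single (n + 1) c := by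
  simp [RBop, Finsupp.mapDomain_single]

lemma single_mem_of_le' {k : Type*} [CommRing k] {l : k} {I : Submodule k (ℕ →₀ k)}
    (hI : IsRBIdeal l I) {n j : ℕ} (hnj : n ≤ j) {c : k}
    (h : Finsupp.single n c ∈ I) : Finsupp.single j c ∈ I := by
  induction j, hnj using Nat.le_induction with
  | base => exact h
  | succ j hj ih => rw [← RBop_single']; exact hI.2 _ ih

lemma single_sum_mem' {k : Type*} [CommRing k] {I : Submodule k (ℕ →₀ k)} (j : ℕ)
    {ι : Type*} (s : Finset ι) (F : ι → k)
    (h : ∀ x ∈ s, Finsupp.single j (F x) ∈ I) :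
    Finsupp.single j (∑ x ∈ s, F x) ∈ I := by
  classical
  induction s using Finset.induction with
  | empty => simpa using I.zero_mem
  | @insert a s ha ih =>
    rw [Finset.sum_insert ha, Finsupp.single_add]
    exact I.add_mem (h _ (Finset.mem_insert_self _ _))
      (ih fun x hx => h x (Finset.mem_insert_of_mem hx))

lemma diamond_comp_mem' {k : Type*} [CommRing k] {l : k} {I : Submodule k (ℕ →₀ k)}
    (hI : IsRBIdeal l I) (f g : ℕ →₀ k) (hg : ∀ n, Finsupp.single n (g n) ∈ I) (j : ℕ) :
    Finsupp.single j ((diamond l f g) j) ∈ I := by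
  classical
  have happ : (diamond l f g) j =
      ∑ m ∈ f.support, ∑ n ∈ g.support, ∑ i ∈ Finset.range (min m n + 1),
        (if m + n - i = j then
          f m * g n * (((m + n - i).choose m : k)) * ((m.choose i : k)) * l ^ i else 0) := by
    rw [diamond, Finsupp.sum, Finsupp.finset_sum_apply]
    refine Finset.sum_congr rfl fun m _ => ?_
    rw [Finsupp.sum, Finsupp.finset_sum_apply]
    refine Finset.sum_congr rfl fun n _ => ?_
    rw [Finsupp.finset_sum_apply]
    refine Finset.sum_congr rfl fun i _ => ?_
    rw [Finsupp.single_apply]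
  rw [happ]
  refine single_sum_mem' j _ _ fun m _ => single_sum_mem' j _ _ fun n _ =>
    single_sum_mem' j _ _ fun i hi => ?_
  split_ifs with hij
  · have hn : n ≤ j := by
      have him : i ≤ m :=
        le_trans (Nat.lt_succ_iff.mp (Finset.mem_range.mp hi)) (min_le_left m n)
      omega
    rw [show f m * g n * (((m + n - i).choose m : k)) * ((m.choose i : k)) * l ^ i =
        (f m * (((m + n - i).choose m : k)) * ((m.choose i : k)) * l ^ i) * g n by ring,
      ← Finsupp.smul_single']
    exact I.smul_mem _ (single_mem_of_le' hI hn (hg n))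
  · simpa using I.zero_mem

/-- The submodule of elements all of whose homogeneous components lie in `I`. -/
noncomputable def compSubmodule' {k : Type*} [CommRing k] (I : Submodule k (ℕ →₀ k)) :
    Submodule k (ℕ →₀ k) where
  carrier := {f | ∀ i, Finsupp.single i (f i) ∈ I}
  add_mem' := fun hf hg i => by
    rw [Finsupp.add_apply, Finsupp.single_add]; exact I.add_mem (hf i) (hg i)
  zero_mem' := fun i => by simpa using I.zero_mem
  smul_mem' := fun c f hf i => by
    rw [Finsupp.smul_apply, smul_eq_mul, ← Finsupp.smul_single']
    exact I.smul_mem c (hf i)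

lemma isRBIdeal_compSubmodule' {k : Type*} [CommRing k] {l : k} {I : Submodule k (ℕ →₀ k)}
    (hI : IsRBIdeal l I) : IsRBIdeal l (compSubmodule' I) := by
  constructor
  · intro f g hg i
    exact diamond_comp_mem' hI f g (fun n => hg n) i
  · intro f hf i
    show Finsupp.single i ((Finsupp.mapDomain (· + 1) f) i) ∈ I
    match i with
    | 0 =>
      rw [Finsupp.mapDomain_notin_range]
      · simpa using I.zero_mem
      · rintro ⟨a, ha⟩; simp at ha
    | (n + 1) =>
      rw [show (n + 1) = (fun x => x + 1) n from rfl,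
        Finsupp.mapDomain_apply (add_left_injective 1)]
      rw [← RBop_single']
      exact hI.2 _ (hf n)

/-- A Rota-Baxter ideal `I` of `Ш_k(k)` is generated (as a Rota-Baxter ideal) by a set of
homogeneous elements if and only if it is a homogeneous ideal, i.e. contains every
homogeneous component of each of its elements. -/
theorem homogeneous_rb_ideal_iff {k : Type*} [CommRing k] (l : k)
    (I : Submodule k (ℕ →₀ k)) (hI : IsRBIdeal l I) :
    (∃ S : Set (ℕ →₀ k), (∀ s ∈ S, ∃ (i : ℕ) (c : k), s = Finsupp.single i c) ∧
        I = RBspan l S)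
    ↔ ∀ f ∈ I, ∀ i : ℕ, Finsupp.single i (f i) ∈ I := by
  constructor
  · rintro ⟨S, hShom, rfl⟩
    have hSsub : S ⊆ (RBspan l S : Set (ℕ →₀ k)) := fun s hs =>
      Submodule.mem_sInf.mpr fun J hJ => hJ.2 hs
    have hle : RBspan l S ≤ compSubmodule' (RBspan l S) := by
      apply sInf_le
      refine ⟨isRBIdeal_compSubmodule' hI, ?_⟩
      intro s hs
      obtain ⟨m, c, rfl⟩ := hShom s hs
      intro i
      rcases eq_or_ne m i with rfl | hne
      · rw [Finsupp.single_eq_same]; exact hSsub hs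
      · rw [Finsupp.single_eq_of_ne' hne, Finsupp.single_zero]
        exact (RBspan l S).zero_mem
    exact fun f hf i => hle hf i
  · intro h
    refine ⟨{s | (∃ i c, s = Finsupp.single i c) ∧ s ∈ I}, fun s hs => hs.1, ?_⟩
    apply le_antisymm
    · intro f hf
      rw [RBspan, Submodule.mem_sInf]
      intro J hJ
      have heq : (f.sum fun i c => Finsupp.single i c) = f := Finsupp.sum_single f
      rw [← heq, Finsupp.sum]
      exact Submodule.sum_mem J fun i _ => hJ.2 ⟨⟨i, f i, rfl⟩, h f hf i⟩
    · exact sInf_le ⟨hI, fun s hs => hs.2⟩
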